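/- arXiv:1805.02345 — 2 statements merged into one kernel-verified Lean document; each statement's English description precedes it below -/
import Mathlib

section
/- Let G be a finite simple graph with no isolated vertices, let H be a finite simple graph with γ(H) ≥ 2, and let S be a minimum total dominating set (γ_t-set) of G. Then for every vertex h ∈ V(H), the set D = S × {h} is a minimum dominating set (γ-set) of the lexicographic product G∘H; in particular γ(G∘H) = γ_t(G). -/
open Finset

variable {α β : Type*}

/-- `D` is a dominating set of `G`: every vertex outside `D` has a neighbor in `D`. -/
def IsDomSet (G : SimpleGraph α) (D : Finset α) : Prop :=
  ∀ v ∉ D, ∃ u ∈ D, G.Adj u v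

/-- The domination number `γ(G)`: minimum cardinality of a dominating set. -/
noncomputable def domNum (G : SimpleGraph α) : ℕ :=
  sInf {n | ∃ D : Finset α, IsDomSet G D ∧ D.card = n}

/-- The degree of vertex `v` in `G`. -/
noncomputable def vdeg (G : SimpleGraph α) (v : α) : ℕ :=
  Nat.card (G.neighborSet v)

/-- The (domination) cover number of a set of vertices `A`: the sum of degrees. -/
noncomputable def coverNum (G : SimpleGraph α) (A : Finset α) : ℕ :=
  ∑ v ∈ A, vdeg G v

/-- `D` is a minimum dominating set (γ-set) of `G`. -/
def IsGammaSet (G : SimpleGraph α) (D : Finset α) : Prop :=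
  IsDomSet G D ∧ D.card = domNum G

/-- `S` is a total dominating set of `G`: every vertex has a neighbor in `S`. -/
def IsTotalDomSet (G : SimpleGraph α) (S : Finset α) : Prop :=
  ∀ v, ∃ u ∈ S, G.Adj u v

/-- The total domination number `γ_t(G)`. -/
noncomputable def totalDomNum (G : SimpleGraph α) : ℕ :=
  sInf {n | ∃ S : Finset α, IsTotalDomSet G S ∧ S.card = n}

/-- The lexicographic product `G ∘ H` of two simple graphs. -/
def lexProd (G : SimpleGraph α) (H : SimpleGraph β) : SimpleGraph (α × β) where
  Adj a b := G.Adj a.1 b.1 ∨ (a.1 = b.1 ∧ H.Adj a.2 b.2)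
  symm := by
    constructor
    rintro a b (h | ⟨h1, h2⟩)
    · exact Or.inl h.symm
    · exact Or.inr ⟨h1.symm, h2.symm⟩
  loopless := by
    constructor
    rintro a (h | ⟨_, h⟩)
    · exact G.irrefl h
    · exact H.irrefl h

lemma domNum_le' (G : SimpleGraph α) (D : Finset α) (hD : IsDomSet G D) :
    domNum G ≤ D.card := Nat.sInf_le ⟨D, hD, rfl⟩

lemma totalDomNum_le' (G : SimpleGraph α) (S : Finset α) (hS : IsTotalDomSet G S) :
    totalDomNum G ≤ S.card := Nat.sInf_le ⟨S, hS, rfl⟩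

/-- Key lemma: from a dominating set of the lexicographic product, extract a total
dominating set of `G` of no larger cardinality. -/
lemma exists_totalDomSet_of_lexProd_domSet [Fintype α] [Fintype β]
    (G : SimpleGraph α) (H : SimpleGraph β)
    (hG : ∀ v : α, ∃ u, G.Adj v u) (hH : 2 ≤ domNum H) (h : β)
    (D : Finset (α × β)) (hD : IsDomSet (lexProd G H) D) :
    ∃ S : Finset α, IsTotalDomSet G S ∧ S.card ≤ D.card := by
  classical
  set A : Finset α := D.image Prod.fst with hA
  set B : Finset α := A.filter (fun a => ¬ ∃ u ∈ A, G.Adj u a) with hB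
  -- fibers
  have hfib : ∀ a ∈ A, 1 ≤ (D.filter (fun p => p.1 = a)).card := by
    intro a ha
    obtain ⟨p, hp, hpa⟩ := Finset.mem_image.mp ha
    exact Finset.card_pos.mpr ⟨p, Finset.mem_filter.mpr ⟨hp, hpa⟩⟩
  have hfib2 : ∀ a ∈ B, 2 ≤ (D.filter (fun p => p.1 = a)).card := by
    intro a haB
    rw [hB, Finset.mem_filter] at haB
    obtain ⟨haA, hnoadj⟩ := haB
    -- the fiber's image under snd dominates H
    have hdom : IsDomSet H ((D.filter (fun p => p.1 = a)).image Prod.snd) := by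
      intro y hy
      have hay : (a, y) ∉ D := by
        intro hmem
        exact hy (Finset.mem_image.mpr ⟨(a, y), Finset.mem_filter.mpr ⟨hmem, rfl⟩, rfl⟩)
      obtain ⟨u, hu, hadj⟩ := hD (a, y) hay
      rcases hadj with hadj | ⟨heq, hadj⟩
      · exact absurd ⟨u.1, Finset.mem_image.mpr ⟨u, hu, rfl⟩, hadj⟩ hnoadj
      · exact ⟨u.2, Finset.mem_image.mpr ⟨u, Finset.mem_filter.mpr ⟨hu, heq⟩, rfl⟩, hadj⟩
    calc 2 ≤ domNum H := hH
      _ ≤ ((D.filter (fun p => p.1 = a)).image Prod.snd).card := domNum_le' H _ hdom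
      _ ≤ (D.filter (fun p => p.1 = a)).card := Finset.card_image_le
  refine ⟨A ∪ B.image (fun a => (hG a).choose), ?_, ?_⟩
  · -- total dominating
    intro v
    by_cases hv : ∃ u ∈ A, G.Adj u v
    · obtain ⟨u, hu, hadj⟩ := hv
      exact ⟨u, Finset.mem_union_left _ hu, hadj⟩
    · -- show v ∈ A
      have hvA : v ∈ A := by
        by_cases hmem : (v, h) ∈ D
        · exact Finset.mem_image.mpr ⟨(v, h), hmem, rfl⟩
        · obtain ⟨u, hu, hadj⟩ := hD (v, h) hmem
          rcases hadj with hadj | ⟨heq, _⟩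
          · exact absurd ⟨u.1, Finset.mem_image.mpr ⟨u, hu, rfl⟩, hadj⟩ hv
          · have : u.1 = v := heq
            exact this ▸ Finset.mem_image.mpr ⟨u, hu, rfl⟩
      have hvB : v ∈ B := Finset.mem_filter.mpr ⟨hvA, hv⟩
      refine ⟨(hG v).choose, Finset.mem_union_right _ (Finset.mem_image.mpr ⟨v, hvB, rfl⟩),
        ((hG v).choose_spec).symm⟩
  · -- cardinality
    have hBsub : B ⊆ A := Finset.filter_subset _ _
    have hcard : D.card = ∑ a ∈ A, (D.filter (fun p => p.1 = a)).card := by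
      rw [hA]; exact Finset.card_eq_sum_card_image Prod.fst D
    have hsum : A.card + B.card ≤ ∑ a ∈ A, (D.filter (fun p => p.1 = a)).card := by
      have : A.card + B.card = ∑ a ∈ A, (if a ∈ B then 2 else 1) := by
        rw [Finset.sum_ite, Finset.sum_const, Finset.sum_const, smul_eq_mul, smul_eq_mul,
          mul_one]
        have h1 : A.filter (fun a => a ∈ B) = B := by
          ext a; simp only [Finset.mem_filter]
          exact ⟨fun ⟨_, hb⟩ => hb, fun hb => ⟨hBsub hb, hb⟩⟩
        have h2 : (A.filter (fun a => ¬ a ∈ B)).card = A.card - B.card := by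
          rw [Finset.filter_not, Finset.card_sdiff_of_subset]
          · have : A.filter (fun a => a ∈ B) = B := by
              ext a; simp only [Finset.mem_filter]
              exact ⟨fun ⟨_, hb⟩ => hb, fun hb => ⟨hBsub hb, hb⟩⟩
            rw [this]
          · exact Finset.filter_subset _ _
        rw [h1, h2]
        have := Finset.card_le_card hBsub
        omega
      rw [this]
      refine Finset.sum_le_sum fun a ha => ?_
      by_cases hb : a ∈ B
      · simp only [hb, if_true]; exact hfib2 a hb
      · simp only [hb, if_false]; exact hfib a ha
    calc (A ∪ B.image (fun a => (hG a).choose)).card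
        ≤ A.card + (B.image (fun a => (hG a).choose)).card := Finset.card_union_le _ _
      _ ≤ A.card + B.card := by
          exact Nat.add_le_add_left Finset.card_image_le _
      _ ≤ ∑ a ∈ A, (D.filter (fun p => p.1 = a)).card := hsum
      _ = D.card := hcard.symm

/-- If `G` has no isolated vertices, `γ(H) ≥ 2`, and `S` is a minimum total
dominating set of `G`, then for every vertex `h` of `H` the set `S × {h}` is a
minimum dominating set of `G ∘ H`; in particular `γ(G ∘ H) = γ_t(G)`. -/
theorem lexProd_gammaSet_of_totalDomSet [Fintype α] [Fintype β]
    (G : SimpleGraph α) (H : SimpleGraph β)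
    (hG : ∀ v : α, ∃ u, G.Adj v u) (hH : 2 ≤ domNum H)
    (S : Finset α) (hS : IsTotalDomSet G S) (hScard : S.card = totalDomNum G)
    (h : β) :
    IsGammaSet (lexProd G H) (S ×ˢ {h}) ∧ domNum (lexProd G H) = totalDomNum G := by
  classical
  -- S ×ˢ {h} dominates the product
  have hdom : IsDomSet (lexProd G H) (S ×ˢ {h}) := by
    rintro ⟨a, x⟩ -
    obtain ⟨u, hu, hadj⟩ := hS a
    exact ⟨(u, h), Finset.mem_product.mpr ⟨hu, Finset.mem_singleton_self h⟩, Or.inl hadj⟩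
  have hcard : (S ×ˢ {h}).card = S.card := by
    rw [Finset.card_product, Finset.card_singleton, mul_one]
  -- upper bound
  have hub : domNum (lexProd G H) ≤ totalDomNum G := by
    calc domNum (lexProd G H) ≤ (S ×ˢ {h}).card := domNum_le' _ _ hdom
      _ = S.card := hcard
      _ = totalDomNum G := hScard
  -- lower bound
  have hlb : totalDomNum G ≤ domNum (lexProd G H) := by
    have hne : {n | ∃ D : Finset (α × β), IsDomSet (lexProd G H) D ∧ D.card = n}.Nonempty := by
      refine ⟨(Finset.univ).card, Finset.univ, fun v hv => absurd (Finset.mem_univ v) hv, rfl⟩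
    obtain ⟨D, hDdom, hDcard⟩ := Nat.sInf_mem hne
    obtain ⟨T, hT, hTcard⟩ := exists_totalDomSet_of_lexProd_domSet G H hG hH h D hDdom
    calc totalDomNum G ≤ T.card := totalDomNum_le' _ _ hT
      _ ≤ D.card := hTcard
      _ = domNum (lexProd G H) := hDcard
  have heq : domNum (lexProd G H) = totalDomNum G := le_antisymm hub hlb
  exact ⟨⟨hdom, by rw [hcard, hScard, heq]⟩, heq⟩
end

section
/- Let G be a finite simple graph with no isolated vertices, let H be a finite simple graph, let S be a total dominating set of G, and let h ∈ V(H). Then the set D = S × {h} is a dominating set of the lexicographic product G∘H and its domination cover number satisfies C_D(G∘H) = C_S(G) · |V(H)| + |S| · deg_H(h). -/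
open Finset

variable {α β : Type*}

open scoped Classical in
lemma vdeg_eq_filter [Fintype α] (G : SimpleGraph α) (v : α) :
    vdeg G v = (univ.filter fun u => G.Adj v u).card := by
  classical
  rw [vdeg, Nat.card_eq_fintype_card, ← Set.toFinset_card]
  congr 1
  ext u
  simp [SimpleGraph.neighborSet]
  exact Set.mem_toFinset

open scoped Classical in
lemma vdeg_lexProd [Fintype α] [Fintype β] (G : SimpleGraph α) (H : SimpleGraph β)
    (v : α) (h : β) :
    vdeg (lexProd G H) (v, h) = vdeg G v * Fintype.card β + vdeg H h := by
  classical
  rw [vdeg_eq_filter, vdeg_eq_filter, vdeg_eq_filter]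
  have : (univ.filter fun u : α × β => (lexProd G H).Adj (v, h) u) =
      ((univ.filter fun u => G.Adj v u) ×ˢ univ) ∪ ({v} ×ˢ (univ.filter fun y => H.Adj h y)) := by
    ext ⟨u, y⟩
    simp only [mem_filter, mem_union, mem_product, mem_univ, mem_singleton, true_and, and_true]
    constructor
    · rintro (hg | ⟨rfl, hh⟩)
      · exact Or.inl hg
      · exact Or.inr ⟨rfl, hh⟩
    · rintro (hg | ⟨rfl, hh⟩)
      · exact Or.inl hg
      · exact Or.inr ⟨rfl, hh⟩
  rw [this, card_union_of_disjoint, card_product, card_product, card_singleton,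
    card_univ, one_mul]
  rw [disjoint_left]
  rintro ⟨u, y⟩ hu hv
  simp only [mem_product, mem_filter, mem_univ, mem_singleton, true_and] at hu hv
  exact G.loopless.irrefl v (hv.1 ▸ hu.1)

/-- If `G` has no isolated vertices, `S` is a total dominating set of `G` and
`h ∈ V(H)`, then `D = S × {h}` is a dominating set of `G ∘ H` with cover number
`C_D(G ∘ H) = C_S(G) · |V(H)| + |S| · deg_H(h)`. -/
theorem lexProd_coverNum_of_totalDomSet [Fintype α] [Fintype β]
    (G : SimpleGraph α) (H : SimpleGraph β)
    (hG : ∀ v : α, ∃ u, G.Adj v u)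
    (S : Finset α) (hS : IsTotalDomSet G S) (h : β) :
    IsDomSet (lexProd G H) (S ×ˢ {h}) ∧
    coverNum (lexProd G H) (S ×ˢ {h}) =
      coverNum G S * Fintype.card β + S.card * vdeg H h := by
  constructor
  · rintro ⟨v, y⟩ _
    obtain ⟨u, hu, hadj⟩ := hS v
    exact ⟨(u, h), by simp [hu], Or.inl hadj⟩
  · rw [coverNum, Finset.sum_product, coverNum]
    calc ∑ v ∈ S, ∑ y ∈ ({h} : Finset β), vdeg (lexProd G H) (v, y)
        = ∑ v ∈ S, (vdeg G v * Fintype.card β + vdeg H h) :=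
          Finset.sum_congr rfl fun v _ => by rw [Finset.sum_singleton, vdeg_lexProd]
      _ = _ := by rw [Finset.sum_add_distrib, Finset.sum_const, smul_eq_mul, ← Finset.sum_mul]
end
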